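/- arXiv:2002.08597 — 3 statements merged into one kernel-verified Lean document; each statement's English description precedes it below -/
import Mathlib

section
/- Let m_x, m_y ∈ ℝ, σ_x > 0, s_y > 0 and c ∈ ℝ with c² < σ_x² s_y², and let f be the bivariate Gaussian density on ℝ² with mean (m_x, m_y) and covariance matrix [[σ_x², c],[c, s_y²]]. Set a* = (a − m_y)/s_y for a ∈ ℝ. Then ∫_{ℝ×(-∞,a]} x f(x,y) d(x,y) = m_x Φ(a*) − (c/s_y) φ(a*); equivalently, E[X | Y ≤ a] = m_x − (c/s_y)·φ(a*)/Φ(a*). -/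
open MeasureTheory Real Matrix

/-- The standard normal probability density function. -/
noncomputable def stdPdf (t : ℝ) : ℝ := (Real.sqrt (2 * Real.pi))⁻¹ * Real.exp (-t ^ 2 / 2)

/-- The standard normal cumulative distribution function. -/
noncomputable def stdCdf (t : ℝ) : ℝ := ∫ u in Set.Iic t, stdPdf u

/-- The Gaussian density on `ℝᵈ` with mean `μ` and covariance matrix `S`. -/
noncomputable def gaussDensity {d : ℕ} (μ : Fin d → ℝ) (S : Matrix (Fin d) (Fin d) ℝ)
    (z : Fin d → ℝ) : ℝ :=
  (Real.sqrt ((2 * Real.pi) ^ d * S.det))⁻¹ *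
    Real.exp (-(1 / 2) * ((z - μ) ⬝ᵥ (S⁻¹ *ᵥ (z - μ))))

section helpers
open Set Filter

lemma stdPdf_eq (t : ℝ) : stdPdf t = (Real.sqrt (2 * Real.pi))⁻¹ * Real.exp (-(1/2) * t ^ 2) := by
  unfold stdPdf; ring_nf

lemma stdPdf_nonneg (t : ℝ) : 0 ≤ stdPdf t := by
  unfold stdPdf; positivity

lemma continuous_stdPdf : Continuous stdPdf := by
  unfold stdPdf; continuity

lemma integrable_stdPdf : Integrable stdPdf := by
  simp only [funext stdPdf_eq]
  exact (integrable_exp_neg_mul_sq (by norm_num : (0:ℝ) < 1/2)).const_mul _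

lemma integral_stdPdf : ∫ t, stdPdf t = 1 := by
  simp only [funext stdPdf_eq]
  rw [MeasureTheory.integral_const_mul, integral_gaussian]
  rw [show Real.pi / (1/2) = 2 * Real.pi by ring]
  rw [inv_mul_cancel₀]
  positivity

lemma integrable_id_mul_stdPdf : Integrable (fun t => t * stdPdf t) := by
  have h := (integrable_mul_exp_neg_mul_sq (by norm_num : (0:ℝ) < 1/2)).const_mul
    ((Real.sqrt (2 * Real.pi))⁻¹)
  refine h.congr ?_
  filter_upwards with t
  rw [stdPdf_eq]; ring

lemma integral_id_mul_stdPdf : ∫ t, t * stdPdf t = 0 := by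
  have h := integral_neg_eq_self (fun t : ℝ => t * stdPdf t) volume
  have h2 : ∫ t : ℝ, (-t) * stdPdf (-t) = - ∫ t, t * stdPdf t := by
    rw [← integral_neg]
    congr 1; funext t; simp [stdPdf, neg_sq]
  linarith [h.symm.trans h2]

lemma tendsto_stdPdf_atBot : Filter.Tendsto stdPdf Filter.atBot (nhds 0) := by
  have hsq : Filter.Tendsto (fun t : ℝ => t ^ 2) Filter.atBot Filter.atTop := by
    apply Filter.tendsto_atBot_atTop.2
    intro b
    refine ⟨-(|b| + 1), fun a ha => ?_⟩
    nlinarith [abs_nonneg b, le_abs_self b, neg_abs_le b]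
  have h1 : Filter.Tendsto (fun t : ℝ => -t ^ 2 / 2) Filter.atBot Filter.atBot := by
    apply Filter.Tendsto.atBot_div_const (by norm_num)
    exact Filter.tendsto_neg_atTop_atBot.comp hsq
  have h2 := (Real.tendsto_exp_atBot.comp h1).const_mul ((Real.sqrt (2 * Real.pi))⁻¹)
  rw [mul_zero] at h2
  exact h2.congr fun t => by rw [stdPdf]; rfl

lemma hasDerivAt_neg_stdPdf (t : ℝ) :
    HasDerivAt (fun u => -stdPdf u) (t * stdPdf t) t := by
  have h1 : HasDerivAt (fun u : ℝ => -u ^ 2 / 2) (-t) t := by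
    have := ((hasDerivAt_pow 2 t).neg).div_const 2
    exact this.congr_deriv (by norm_num; ring)
  have h2 := (h1.exp.const_mul ((Real.sqrt (2 * Real.pi))⁻¹)).neg
  have e1 : (fun u => -stdPdf u) = fun u => -((Real.sqrt (2 * Real.pi))⁻¹ * Real.exp (-u^2/2)) := by
    funext u; rw [stdPdf]
  rw [e1, show t * stdPdf t = -((Real.sqrt (2 * Real.pi))⁻¹ * (Real.exp (-t^2/2) * -t)) by
    rw [stdPdf]; ring]
  exact h2

lemma integral_Iic_id_mul_stdPdf (t : ℝ) : ∫ u in Iic t, u * stdPdf u = -stdPdf t := by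
  have := integral_Iic_of_hasDerivAt_of_tendsto' (f := fun u => -stdPdf u)
    (f' := fun u => u * stdPdf u) (a := t) (m := 0)
    (fun x _ => hasDerivAt_neg_stdPdf x)
    integrable_id_mul_stdPdf.integrableOn
    (tendsto_stdPdf_atBot.neg.mono_right (by rw [neg_zero]))
  simpa using this

lemma me_affine {s : ℝ} (hs : s ≠ 0) (m : ℝ) :
    MeasurableEmbedding (fun y : ℝ => (y - m) / s) := by
  have h1 : (fun y : ℝ => (y - m) / s)
      = ((Homeomorph.addRight (-m)).trans (Homeomorph.mulRight₀ s⁻¹ (inv_ne_zero hs))) := by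
    funext y; simp [div_eq_mul_inv, sub_eq_add_neg]
  rw [h1]
  exact ((Homeomorph.addRight (-m)).trans
    (Homeomorph.mulRight₀ s⁻¹ (inv_ne_zero hs))).measurableEmbedding

lemma map_affine {s : ℝ} (hs : 0 < s) (m : ℝ) :
    Measure.map (fun y : ℝ => (y - m) / s) volume = ENNReal.ofReal s • volume := by
  have h1 : (fun y : ℝ => (y - m) / s) = (fun t : ℝ => t * s⁻¹) ∘ (fun y : ℝ => y + (-m)) := by
    funext y; simp [div_eq_mul_inv, sub_eq_add_neg]
  rw [h1, ← Measure.map_map (measurable_mul_const s⁻¹) (measurable_add_const (-m))]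
  rw [map_add_right_eq_self volume (-m)]
  rw [Real.map_volume_mul_right (inv_ne_zero hs.ne')]
  congr 1
  rw [inv_inv, abs_of_pos hs]

lemma integral_comp_affine {s : ℝ} (hs : 0 < s) (m : ℝ) (F : ℝ → ℝ) :
    ∫ y, F ((y - m) / s) = s * ∫ v, F v := by
  rw [← (me_affine hs.ne' m).integral_map (g := F), map_affine hs m, integral_smul_measure,
    ENNReal.toReal_ofReal hs.le, smul_eq_mul]

lemma setIntegral_comp_affine_Iic {s : ℝ} (hs : 0 < s) (m b : ℝ) (F : ℝ → ℝ) :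
    ∫ y in Iic b, F ((y - m) / s) = s * ∫ v in Iic ((b - m) / s), F v := by
  have h := (me_affine hs.ne' m).setIntegral_map (μ := volume) F (Iic ((b - m) / s))
  have hpre : (fun y : ℝ => (y - m) / s) ⁻¹' Iic ((b - m) / s) = Iic b := by
    ext y
    simp only [mem_preimage, mem_Iic]
    rw [div_le_div_iff_of_pos_right hs, sub_le_sub_iff_right]
  rw [hpre, map_affine hs m, Measure.restrict_smul, integral_smul_measure,
    ENNReal.toReal_ofReal hs.le, smul_eq_mul] at h
  linarith [h]

lemma integrable_comp_affine {F : ℝ → ℝ} (hF : Integrable F) {s : ℝ} (hs : 0 < s) (m : ℝ) :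
    Integrable (fun y => F ((y - m) / s)) := by
  have h := (me_affine hs.ne' m).integrable_map_iff (μ := volume) (g := F)
  rw [map_affine hs m] at h
  exact h.mp (hF.smul_measure ENNReal.ofReal_ne_top)

lemma gauss_factor (mx my σx sy c : ℝ) (hsy : 0 < sy)
    (hc : c ^ 2 < σx ^ 2 * sy ^ 2) (x y : ℝ) :
    gaussDensity ![mx, my] !![σx ^ 2, c; c, sy ^ 2] ![x, y]
      = (sy⁻¹ * stdPdf ((y - my) / sy)) *
        ((Real.sqrt (σx ^ 2 * sy ^ 2 - c ^ 2) / sy)⁻¹ *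
          stdPdf ((x - (mx + c / sy ^ 2 * (y - my))) / (Real.sqrt (σx ^ 2 * sy ^ 2 - c ^ 2) / sy))) := by
  have hΔ : 0 < σx ^ 2 * sy ^ 2 - c ^ 2 := by linarith
  set Δ : ℝ := σx ^ 2 * sy ^ 2 - c ^ 2 with hΔdef
  have hsΔ : 0 < Real.sqrt Δ := Real.sqrt_pos.2 hΔ
  set τ : ℝ := Real.sqrt Δ / sy with hτdef
  have hτ : 0 < τ := div_pos hsΔ hsy
  have hτsq : τ ^ 2 = Δ / sy ^ 2 := by
    rw [hτdef, div_pow, Real.sq_sqrt hΔ.le]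
  have h2π : (0:ℝ) < 2 * Real.pi := by positivity
  unfold gaussDensity stdPdf
  rw [Matrix.inv_def, Matrix.adjugate_fin_two_of, Matrix.det_fin_two_of, Ring.inverse_eq_inv']
  simp only [Matrix.smul_apply, Matrix.mulVec, dotProduct, Fin.sum_univ_two,
    Matrix.cons_val_zero, Matrix.cons_val_one, Matrix.head_cons, Pi.sub_apply,
    Matrix.cons_val', Matrix.head_fin_const, smul_eq_mul, Matrix.smul_of, Matrix.of_apply,
    Matrix.cons_val_fin_one, Matrix.empty_val']
  have hcc : σx ^ 2 * sy ^ 2 - c * c = Δ := by rw [hΔdef]; ring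
  rw [hcc]
  trans ((sy⁻¹ * (Real.sqrt (2 * Real.pi))⁻¹ * (τ⁻¹ * (Real.sqrt (2 * Real.pi))⁻¹)) *
    Real.exp (-((y - my) / sy) ^ 2 / 2 +
      -((x - (mx + c / sy ^ 2 * (y - my))) / τ) ^ 2 / 2))
  · have hconst : (Real.sqrt ((2 * Real.pi) ^ (Nat.succ 0).succ * Δ))⁻¹
        = sy⁻¹ * (Real.sqrt (2 * Real.pi))⁻¹ * (τ⁻¹ * (Real.sqrt (2 * Real.pi))⁻¹) := by
      have h1 : Real.sqrt ((2 * Real.pi) ^ (Nat.succ 0).succ * Δ)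
          = (2 * Real.pi) * Real.sqrt Δ := by
        rw [Real.sqrt_mul (by positivity), show ((Nat.succ 0).succ) = 2 from rfl,
          Real.sqrt_sq h2π.le]
      rw [h1, hτdef]
      rw [show (Real.sqrt Δ / sy)⁻¹ = sy / Real.sqrt Δ by rw [inv_div]]
      field_simp
      have e2 : (Real.sqrt 2) * Real.sqrt 2 = 2 := Real.mul_self_sqrt (by norm_num)
      have eπ : (Real.sqrt Real.pi) * Real.sqrt Real.pi = Real.pi :=
        Real.mul_self_sqrt Real.pi_pos.le
      linear_combination Real.sq_sqrt h2π.le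
    rw [hconst]
    congr 1
    have hμ : -(((x - (mx + c / sy ^ 2 * (y - my))) / τ) ^ 2) / 2
        = -((x - (mx + c / sy ^ 2 * (y - my))) ^ 2 / (Δ / sy ^ 2)) / 2 := by
      rw [div_pow, hτsq]
    rw [hμ, hΔdef]
    have hsy0 := hsy.ne'
    have hΔ0 := hΔ.ne'
    rw [hΔdef] at hΔ0
    congr 1
    field_simp
    ring
  · rw [Real.exp_add]
    ring

lemma integrable_h {τ : ℝ} (hτ : 0 < τ) (m : ℝ) :
    Integrable (fun x => τ⁻¹ * stdPdf ((x - m) / τ)) :=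
  (integrable_comp_affine integrable_stdPdf hτ m).const_mul _

lemma x_shift_eq {τ : ℝ} (hτ : 0 < τ) (m : ℝ) :
    (fun x => x * (τ⁻¹ * stdPdf ((x - m) / τ)))
      = fun x => (fun u => u * stdPdf u) ((x - m) / τ) + (m * τ⁻¹) * stdPdf ((x - m) / τ) := by
  funext x
  field_simp
  ring

lemma integrable_x_shift {τ : ℝ} (hτ : 0 < τ) (m : ℝ) :
    Integrable (fun x => x * (τ⁻¹ * stdPdf ((x - m) / τ))) := by
  rw [x_shift_eq hτ m]
  exact (integrable_comp_affine integrable_id_mul_stdPdf hτ m).add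
    ((integrable_comp_affine integrable_stdPdf hτ m).const_mul _)

lemma integral_x_shift {τ : ℝ} (hτ : 0 < τ) (m : ℝ) :
    ∫ x, x * (τ⁻¹ * stdPdf ((x - m) / τ)) = m := by
  rw [x_shift_eq hτ m]
  rw [integral_add (integrable_comp_affine integrable_id_mul_stdPdf hτ m)
    ((integrable_comp_affine integrable_stdPdf hτ m).const_mul _)]
  rw [integral_comp_affine hτ m (fun u => u * stdPdf u), integral_id_mul_stdPdf,
    MeasureTheory.integral_const_mul, integral_comp_affine hτ m stdPdf, integral_stdPdf]
  field_simp
  ring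

end helpers

set_option maxHeartbeats 1000000 in
theorem bivariate_censored_conditional_mean_lower
    (mx my σx sy c : ℝ) (hσx : 0 < σx) (hsy : 0 < sy) (hc : c ^ 2 < σx ^ 2 * sy ^ 2)
    (f : ℝ → ℝ → ℝ)
    (hf : ∀ x y, f x y = gaussDensity ![mx, my] !![σx ^ 2, c; c, sy ^ 2] ![x, y])
    (a : ℝ) :
    ∫ p in (Set.univ ×ˢ Set.Iic a : Set (ℝ × ℝ)), p.1 * f p.1 p.2
      = mx * stdCdf ((a - my) / sy) - (c / sy) * stdPdf ((a - my) / sy) := by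
  have hΔ : 0 < σx ^ 2 * sy ^ 2 - c ^ 2 := by linarith
  set τ : ℝ := Real.sqrt (σx ^ 2 * sy ^ 2 - c ^ 2) / sy with hτdef
  have hτ : 0 < τ := div_pos (Real.sqrt_pos.2 hΔ) hsy
  set μy : ℝ → ℝ := fun y => mx + c / sy ^ 2 * (y - my) with hμydef
  set g : ℝ → ℝ := fun y => sy⁻¹ * stdPdf ((y - my) / sy) with hgdef
  set h : ℝ → ℝ → ℝ := fun y x => τ⁻¹ * stdPdf ((x - μy y) / τ) with hhdef
  have hfac : ∀ x y, f x y = g y * h y x := fun x y => by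
    rw [hf x y]; exact gauss_factor mx my σx sy c hsy hc x y
  -- continuity facts
  have hcg : Continuous g := by
    rw [hgdef]
    exact continuous_const.mul (continuous_stdPdf.comp (by continuity))
  have hcμ : Continuous μy := by rw [hμydef]; continuity
  have hcW : Continuous (fun u : ℝ => u * stdPdf u) := continuous_id.mul continuous_stdPdf
  have hce : Continuous (fun p : ℝ × ℝ => (p.1 - μy p.2) / τ) :=
    (continuous_fst.sub (hcμ.comp continuous_snd)).div_const τ
  -- integrability facts
  have hg_int : Integrable g := by
    rw [hgdef]; exact (integrable_comp_affine integrable_stdPdf hsy my).const_mul _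
  have hgnn : ∀ y, 0 ≤ g y := fun y => by
    rw [hgdef]; exact mul_nonneg (inv_nonneg.2 hsy.le) (stdPdf_nonneg _)
  set K : ℝ → ℝ := fun v => (mx + (c / sy) * v) * (sy⁻¹ * stdPdf v) with hKdef
  have hKint : Integrable K := by
    have hK2 : K = fun v => (mx * sy⁻¹) * stdPdf v + (c / sy * sy⁻¹) * (v * stdPdf v) := by
      funext v; rw [hKdef]; ring
    rw [hK2]
    exact (integrable_stdPdf.const_mul _).add (integrable_id_mul_stdPdf.const_mul _)
  have hμg_eq : (fun y => μy y * g y) = fun y => K ((y - my) / sy) := by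
    funext y
    rw [hKdef, hμydef, hgdef]
    have hsy' : (sy:ℝ) ≠ 0 := hsy.ne'
    field_simp
  have hμg_int : Integrable (fun y => μy y * g y) := by
    rw [hμg_eq]; exact integrable_comp_affine hKint hsy my
  -- auxiliary product functions
  set F1 : ℝ × ℝ → ℝ := fun p => g p.2 * ((fun u => u * stdPdf u) ((p.1 - μy p.2) / τ))
    with hF1def
  set F2 : ℝ × ℝ → ℝ := fun p => (μy p.2 * g p.2) * (h p.2 p.1) with hF2def
  have hF1_int : Integrable F1 ((volume : Measure ℝ).prod volume) := by
    refine (integrable_prod_iff' ?_).2 ⟨?_, ?_⟩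
    · exact (((hcg.comp continuous_snd).mul (hcW.comp hce))).aestronglyMeasurable
    · filter_upwards with y
      exact (integrable_comp_affine integrable_id_mul_stdPdf hτ (μy y)).const_mul (g y)
    · have he : (fun y => ∫ x, ‖F1 (x, y)‖)
          = fun y => g y * (τ * ∫ u, ‖u‖ * ‖stdPdf u‖) := by
        funext y
        rw [hF1def]
        simp only [norm_mul]
        rw [MeasureTheory.integral_const_mul,
          integral_comp_affine hτ (μy y) (fun u => ‖u‖ * ‖stdPdf u‖)]
        rw [Real.norm_eq_abs, abs_of_nonneg (hgnn y)]
      rw [he]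
      exact hg_int.mul_const _
  have hF2_int : Integrable F2 ((volume : Measure ℝ).prod volume) := by
    refine (integrable_prod_iff' ?_).2 ⟨?_, ?_⟩
    · refine (((hcμ.comp continuous_snd).mul (hcg.comp continuous_snd)).mul ?_).aestronglyMeasurable
      rw [hhdef]
      exact continuous_const.mul (continuous_stdPdf.comp hce)
    · filter_upwards with y
      exact (integrable_h hτ (μy y)).const_mul (μy y * g y)
    · have he : (fun y => ∫ x, ‖F2 (x, y)‖)
          = fun y => ‖μy y * g y‖ * (‖τ⁻¹‖ * (τ * ∫ u, ‖stdPdf u‖)) := by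
        funext y
        rw [hF2def, hhdef]
        simp only [norm_mul]
        rw [MeasureTheory.integral_const_mul, MeasureTheory.integral_const_mul,
          integral_comp_affine hτ (μy y) (fun u => ‖stdPdf u‖)]
      rw [he]
      exact hμg_int.norm.mul_const _
  set F : ℝ × ℝ → ℝ := fun p => p.1 * (g p.2 * h p.2 p.1) with hFdef
  have hFsum : F = fun p => F1 p + F2 p := by
    funext p
    rw [hFdef, hF1def, hF2def, hhdef]
    have hτ' : (τ:ℝ) ≠ 0 := hτ.ne'
    field_simp
    ring
  have hF_int : Integrable F ((volume : Measure ℝ).prod volume) := by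
    rw [hFsum]; exact hF1_int.add hF2_int
  -- rewrite the integral
  have hstep : ∫ p in (Set.univ ×ˢ Set.Iic a : Set (ℝ × ℝ)), p.1 * f p.1 p.2
      = ∫ p in (Set.univ ×ˢ Set.Iic a : Set (ℝ × ℝ)), F p := by
    apply setIntegral_congr_fun (by measurability)
    intro p _
    show p.1 * f p.1 p.2 = F p
    rw [hfac p.1 p.2]
  rw [hstep]
  have hmeas : ((volume : Measure (ℝ × ℝ))).restrict (Set.univ ×ˢ Set.Iic a)
      = ((volume : Measure ℝ).prod ((volume : Measure ℝ).restrict (Set.Iic a))) := by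
    have h1 := Measure.prod_restrict (μ := (volume : Measure ℝ)) (ν := (volume : Measure ℝ))
      Set.univ (Set.Iic a)
    rw [Measure.restrict_univ] at h1
    exact h1.symm
  rw [hmeas]
  have hF_int' : Integrable F ((volume : Measure ℝ).prod
      ((volume : Measure ℝ).restrict (Set.Iic a))) := by
    have h2 : Integrable F (((volume : Measure ℝ).restrict Set.univ).prod
        ((volume : Measure ℝ).restrict (Set.Iic a))) := by
      rw [Measure.prod_restrict]
      exact hF_int.integrableOn
    rwa [Measure.restrict_univ] at h2
  rw [integral_prod_symm F hF_int']
  have hinner : ∀ y, (∫ x, F (x, y)) = μy y * g y := by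
    intro y
    have h1 : (fun x => F (x, y)) = fun x => g y * (x * (τ⁻¹ * stdPdf ((x - μy y) / τ))) := by
      funext x; rw [hFdef, hhdef]; ring
    rw [h1, MeasureTheory.integral_const_mul, integral_x_shift hτ (μy y)]
    ring
  simp only [hinner]
  rw [show (fun y => μy y * g y) = fun y => K ((y - my) / sy) from hμg_eq] -- may need congr form
  rw [setIntegral_comp_affine_Iic hsy my a K]
  have hK2 : K = fun v => (mx * sy⁻¹) * stdPdf v + (c / sy * sy⁻¹) * (v * stdPdf v) := by
    funext v; rw [hKdef]; ring
  rw [hK2]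
  rw [MeasureTheory.integral_add ((integrable_stdPdf.const_mul _).integrableOn)
    ((integrable_id_mul_stdPdf.const_mul _).integrableOn)]
  rw [MeasureTheory.integral_const_mul, MeasureTheory.integral_const_mul,
    integral_Iic_id_mul_stdPdf]
  rw [show (∫ v in Set.Iic ((a - my) / sy), stdPdf v) = stdCdf ((a - my) / sy) from rfl]
  have hsy' : (sy:ℝ) ≠ 0 := hsy.ne'
  field_simp
  ring
end

section
/- Let m_x, m_y ∈ ℝ, σ_x > 0, s_y > 0 and c ∈ ℝ with c² < σ_x² s_y², and let f be the bivariate Gaussian density on ℝ² with mean (m_x, m_y) and covariance matrix [[σ_x², c],[c, s_y²]]. Fix a ∈ ℝ, set a* = (a − m_y)/s_y and λ = φ(a*)/Φ(a*), and let μ̂ = (1/Φ(a*)) ∫_{ℝ×(-∞,a]} x f(x,y) d(x,y). Then (1/Φ(a*)) ∫_{ℝ×(-∞,a]} x² f(x,y) d(x,y) − μ̂² = σ_x² − (c²/s_y²)·(a*·λ + λ²); that is, the conditional variance of X given Y ≤ a equals σ_x² − (c²/s_y²)(a* φ(a*)/Φ(a*) + (φ(a*)/Φ(a*))²). -/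
open MeasureTheory Real Matrix

open Set Filter

noncomputable def gpdf (m s x : ℝ) : ℝ :=
  (s * Real.sqrt (2 * Real.pi))⁻¹ * Real.exp (-(x - m) ^ 2 / (2 * s ^ 2))

lemma gpdf_eq (m s x : ℝ) :
    gpdf m s x = (s * Real.sqrt (2 * Real.pi))⁻¹ * Real.exp (-(2 * s ^ 2)⁻¹ * (x - m) ^ 2) := by
  unfold gpdf; ring_nf

lemma gpdf_pos {m s : ℝ} (hs : 0 < s) (x : ℝ) : 0 < gpdf m s x := by
  unfold gpdf
  positivity

lemma continuous_gpdf (m s : ℝ) : Continuous (gpdf m s) := by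
  unfold gpdf; fun_prop

lemma integrable_gpdf {s : ℝ} (hs : 0 < s) (m : ℝ) : Integrable (gpdf m s) := by
  have hb : (0:ℝ) < (2 * s ^ 2)⁻¹ := by positivity
  have h := ((integrable_exp_neg_mul_sq hb).comp_sub_right m).const_mul
    ((s * Real.sqrt (2 * Real.pi))⁻¹)
  exact h.congr (Filter.Eventually.of_forall fun x => (gpdf_eq m s x).symm)

lemma integrable_sub_mul_gpdf {s : ℝ} (hs : 0 < s) (m : ℝ) :
    Integrable (fun x => (x - m) * gpdf m s x) := by
  have hb : (0:ℝ) < (2 * s ^ 2)⁻¹ := by positivity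
  have h := (((integrable_mul_exp_neg_mul_sq hb).const_mul
    ((s * Real.sqrt (2 * Real.pi))⁻¹)).comp_sub_right m)
  refine h.congr (Filter.Eventually.of_forall fun x => ?_)
  simp only [gpdf_eq]; ring

lemma integrable_sq_sub_mul_gpdf {s : ℝ} (hs : 0 < s) (m : ℝ) :
    Integrable (fun x => (x - m) ^ 2 * gpdf m s x) := by
  have hb : (0:ℝ) < (2 * s ^ 2)⁻¹ := by positivity
  have h2 : Integrable (fun u : ℝ => u ^ 2 * Real.exp (-(2 * s ^ 2)⁻¹ * u ^ 2)) := by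
    have h := integrable_rpow_mul_exp_neg_mul_sq hb (by norm_num : (-1:ℝ) < 2)
    refine h.congr (Filter.Eventually.of_forall fun u => ?_)
    simp only
    rw [show u ^ (2:ℝ) = u ^ (2:ℕ) from by rw [← Real.rpow_natCast u 2]; norm_num]
  have h := ((h2.const_mul ((s * Real.sqrt (2 * Real.pi))⁻¹)).comp_sub_right m)
  refine h.congr (Filter.Eventually.of_forall fun x => ?_)
  simp only [gpdf_eq]; ring


lemma sqrt_two_pi_sq {s : ℝ} (hs : 0 < s) :
    Real.sqrt (2 * Real.pi * s ^ 2) = s * Real.sqrt (2 * Real.pi) := by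
  rw [show (2 * Real.pi * s ^ 2 : ℝ) = (s * Real.sqrt (2 * Real.pi)) ^ 2 by
    rw [mul_pow, Real.sq_sqrt (by positivity)]; ring]
  exact Real.sqrt_sq (by positivity)

lemma integral_gpdf {s : ℝ} (hs : 0 < s) (m : ℝ) : ∫ x, gpdf m s x = 1 := by
  have hb : (0:ℝ) < (2 * s ^ 2)⁻¹ := by positivity
  unfold gpdf
  rw [integral_const_mul]
  have h1 : ∀ x : ℝ, Real.exp (-(x - m) ^ 2 / (2 * s ^ 2))
      = (fun u : ℝ => Real.exp (-(2 * s ^ 2)⁻¹ * u ^ 2)) (x - m) := by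
    intro x; simp only; ring_nf
  rw [integral_congr_ae (Filter.Eventually.of_forall h1),
    integral_sub_right_eq_self (fun u : ℝ => Real.exp (-(2 * s ^ 2)⁻¹ * u ^ 2)) m,
    integral_gaussian]
  have h2 : Real.pi / (2 * s ^ 2)⁻¹ = 2 * Real.pi * s ^ 2 := by
    field_simp
  rw [h2, sqrt_two_pi_sq hs]
  have h3 : Real.sqrt (2 * Real.pi) ≠ 0 := by positivity
  field_simp


lemma hasDerivAt_gpdf {m s : ℝ} (hs : 0 < s) (x : ℝ) :
    HasDerivAt (gpdf m s) (-(x - m) / s ^ 2 * gpdf m s x) x := by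
  have h1 : HasDerivAt (fun x : ℝ => -(x - m) ^ 2 / (2 * s ^ 2))
      (-(x - m) / s ^ 2) x := by
    have h2 : HasDerivAt (fun x : ℝ => x - m) 1 x := (hasDerivAt_id x).sub_const m
    have h3 := (h2.pow 2).neg.div_const (2 * s ^ 2)
    refine h3.congr_deriv ?_
    field_simp
    ring
  have h4 := (h1.exp).const_mul ((s * Real.sqrt (2 * Real.pi))⁻¹)
  refine h4.congr_deriv ?_
  unfold gpdf
  ring

lemma tendsto_gpdf_cocompact {m s : ℝ} (hs : 0 < s) :
    Tendsto (gpdf m s) (cocompact ℝ) (nhds 0) := by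
  have hb : (0:ℝ) < (2 * s ^ 2)⁻¹ := by positivity
  have h0 : Tendsto (fun u : ℝ => Real.exp (-(2 * s ^ 2)⁻¹ * u ^ 2)) (cocompact ℝ) (nhds 0) := by
    have := tendsto_rpow_abs_mul_exp_neg_mul_sq_cocompact hb 0
    simpa using this
  have hsub : Tendsto (fun x : ℝ => x - m) (cocompact ℝ) (cocompact ℝ) :=
    (Homeomorph.subRight m).toCocompactMap.cocompact_tendsto'
  have := (h0.comp hsub).const_mul ((s * Real.sqrt (2 * Real.pi))⁻¹)
  simp only [mul_zero] at this
  refine this.congr fun x => ?_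
  simp only [Function.comp]
  rw [gpdf]
  ring_nf

lemma tendsto_sub_mul_gpdf_cocompact {m s : ℝ} (hs : 0 < s) :
    Tendsto (fun x => (x - m) * gpdf m s x) (cocompact ℝ) (nhds 0) := by
  have hb : (0:ℝ) < (2 * s ^ 2)⁻¹ := by positivity
  have h0 : Tendsto (fun u : ℝ => u * Real.exp (-(2 * s ^ 2)⁻¹ * u ^ 2)) (cocompact ℝ) (nhds 0) := by
    rw [tendsto_zero_iff_norm_tendsto_zero]
    have := tendsto_rpow_abs_mul_exp_neg_mul_sq_cocompact hb 1
    simp only [Real.rpow_one] at this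
    refine this.congr fun u => ?_
    rw [norm_mul, Real.norm_eq_abs, Real.norm_eq_abs, abs_of_pos (Real.exp_pos _)]
  have hsub : Tendsto (fun x : ℝ => x - m) (cocompact ℝ) (cocompact ℝ) :=
    (Homeomorph.subRight m).toCocompactMap.cocompact_tendsto'
  have := (h0.comp hsub).const_mul ((s * Real.sqrt (2 * Real.pi))⁻¹)
  simp only [mul_zero] at this
  refine this.congr fun x => ?_
  simp only [Function.comp]
  rw [gpdf]
  ring_nf


lemma atBot_le_cocompact' : (atBot : Filter ℝ) ≤ cocompact ℝ := by
  exact atBot_le_cocompact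
lemma atTop_le_cocompact' : (atTop : Filter ℝ) ≤ cocompact ℝ := by
  exact atTop_le_cocompact

/-- derivative of `-s^2 * gpdf` is `(x-m) * gpdf`. -/
lemma hasDerivAt_neg_sq_gpdf {m s : ℝ} (hs : 0 < s) (x : ℝ) :
    HasDerivAt (fun x => -s ^ 2 * gpdf m s x) ((x - m) * gpdf m s x) x := by
  have h := (hasDerivAt_gpdf hs (m := m) x).const_mul (-s ^ 2)
  refine h.congr_deriv ?_
  field_simp

lemma integral_sub_mul_gpdf {s : ℝ} (hs : 0 < s) (m : ℝ) :
    ∫ x, (x - m) * gpdf m s x = 0 := by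
  have h := integral_of_hasDerivAt_of_tendsto (hasDerivAt_neg_sq_gpdf hs)
    (integrable_sub_mul_gpdf hs m)
    (((tendsto_gpdf_cocompact hs).mono_left atBot_le_cocompact').const_mul (-s ^ 2))
    (((tendsto_gpdf_cocompact hs).mono_left atTop_le_cocompact').const_mul (-s ^ 2))
  simpa using h

/-- derivative of `-s^2 * ((x-m) * gpdf)` is `(x-m)^2 * gpdf - s^2 * gpdf`. -/
lemma hasDerivAt_neg_sq_sub_gpdf {m s : ℝ} (hs : 0 < s) (x : ℝ) :
    HasDerivAt (fun x => -s ^ 2 * ((x - m) * gpdf m s x))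
      ((x - m) ^ 2 * gpdf m s x - s ^ 2 * gpdf m s x) x := by
  have h1 : HasDerivAt (fun x : ℝ => x - m) 1 x := (hasDerivAt_id x).sub_const m
  have h := ((h1.mul (hasDerivAt_gpdf hs (m := m) x)).const_mul (-s ^ 2))
  refine h.congr_deriv ?_
  field_simp
  ring

lemma integral_sq_sub_mul_gpdf {s : ℝ} (hs : 0 < s) (m : ℝ) :
    ∫ x, (x - m) ^ 2 * gpdf m s x = s ^ 2 := by
  have hint : Integrable (fun x => (x - m) ^ 2 * gpdf m s x - s ^ 2 * gpdf m s x) :=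
    (integrable_sq_sub_mul_gpdf hs m).sub ((integrable_gpdf hs m).const_mul _)
  have h := integral_of_hasDerivAt_of_tendsto (hasDerivAt_neg_sq_sub_gpdf hs) hint
    (((tendsto_sub_mul_gpdf_cocompact hs).mono_left atBot_le_cocompact').const_mul (-s ^ 2))
    (((tendsto_sub_mul_gpdf_cocompact hs).mono_left atTop_le_cocompact').const_mul (-s ^ 2))
  simp only [mul_zero, sub_zero] at h
  rw [integral_sub (integrable_sq_sub_mul_gpdf hs m) ((integrable_gpdf hs m).const_mul _),
    integral_const_mul, integral_gpdf hs] at h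
  linarith

lemma integrable_id_mul_gpdf {s : ℝ} (hs : 0 < s) (m : ℝ) :
    Integrable (fun x => x * gpdf m s x) := by
  have h := (integrable_sub_mul_gpdf hs m).add ((integrable_gpdf hs m).const_mul m)
  refine h.congr (Filter.Eventually.of_forall fun x => ?_)
  simp only [Pi.add_apply]; ring

lemma integrable_sq_mul_gpdf {s : ℝ} (hs : 0 < s) (m : ℝ) :
    Integrable (fun x => x ^ 2 * gpdf m s x) := by
  have h := ((integrable_sq_sub_mul_gpdf hs m).add
    ((integrable_sub_mul_gpdf hs m).const_mul (2 * m))).add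
    ((integrable_gpdf hs m).const_mul (m ^ 2))
  refine h.congr (Filter.Eventually.of_forall fun x => ?_)
  simp only [Pi.add_apply]; ring

lemma integral_id_mul_gpdf {s : ℝ} (hs : 0 < s) (m : ℝ) :
    ∫ x, x * gpdf m s x = m := by
  have h1 : ∀ x : ℝ, x * gpdf m s x = (x - m) * gpdf m s x + m * gpdf m s x := by
    intro x; ring
  rw [integral_congr_ae (Filter.Eventually.of_forall h1),
    integral_add (integrable_sub_mul_gpdf hs m) ((integrable_gpdf hs m).const_mul m),
    integral_sub_mul_gpdf hs, integral_const_mul, integral_gpdf hs]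
  ring

lemma integral_sq_mul_gpdf {s : ℝ} (hs : 0 < s) (m : ℝ) :
    ∫ x, x ^ 2 * gpdf m s x = s ^ 2 + m ^ 2 := by
  have h1 : ∀ x : ℝ, x ^ 2 * gpdf m s x
      = ((x - m) ^ 2 * gpdf m s x + (2 * m) * ((x - m) * gpdf m s x))
        + m ^ 2 * gpdf m s x := by
    intro x; ring
  have hA : Integrable (fun x => (x - m) ^ 2 * gpdf m s x
      + 2 * m * ((x - m) * gpdf m s x)) := by
    refine ((integrable_sq_sub_mul_gpdf hs m).add
      ((integrable_sub_mul_gpdf hs m).const_mul (2 * m))).congr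
      (Filter.Eventually.of_forall fun x => ?_)
    simp only [Pi.add_apply]
  rw [integral_congr_ae (Filter.Eventually.of_forall h1),
    integral_add hA ((integrable_gpdf hs m).const_mul (m ^ 2)),
    integral_add (integrable_sq_sub_mul_gpdf hs m)
      ((integrable_sub_mul_gpdf hs m).const_mul (2 * m)),
    integral_sq_sub_mul_gpdf hs, integral_const_mul, integral_const_mul,
    integral_sub_mul_gpdf hs, integral_gpdf hs]
  ring


lemma gpdf_std {m s : ℝ} (hs : 0 < s) (x : ℝ) :
    gpdf m s x = stdPdf ((x - m) / s) / s := by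
  unfold gpdf stdPdf
  have h1 : -((x - m) / s) ^ 2 / 2 = -(x - m) ^ 2 / (2 * s ^ 2) := by
    rw [div_pow, neg_div, neg_div, div_div, mul_comm (s ^ 2) 2]
  rw [h1]
  field_simp

/-- change of variables: `∫_{Iic a} gpdf m s = stdCdf ((a-m)/s)` -/
lemma setIntegral_gpdf_Iic {s : ℝ} (hs : 0 < s) (m a : ℝ) :
    ∫ x in Set.Iic a, gpdf m s x = stdCdf ((a - m) / s) := by
  have himg : (fun u : ℝ => s * u + m) '' Set.Iic ((a - m) / s) = Set.Iic a := by
    ext y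
    simp only [Set.mem_image, Set.mem_Iic]
    constructor
    · rintro ⟨u, hu, rfl⟩
      have h4 := (mul_le_mul_of_nonneg_left hu hs.le)
      have h3 : s * ((a - m) / s) = a - m := by field_simp
      rw [h3] at h4
      linarith
    · intro hy
      refine ⟨(y - m) / s, by apply div_le_div_of_nonneg_right (by linarith) hs.le, by field_simp; ring⟩
  have hd : ∀ u : ℝ, HasDerivAt (fun u : ℝ => s * u + m) s u := fun u => by
    simpa using ((hasDerivAt_id u).const_mul s).add_const m
  have hinj : Set.InjOn (fun u : ℝ => s * u + m) (Set.Iic ((a - m) / s)) := by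
    intro u _ v _ huv
    simp only at huv
    have : s * u = s * v := by linarith
    exact mul_left_cancel₀ hs.ne' this
  have hchg := integral_image_eq_integral_abs_deriv_smul (s := Set.Iic ((a - m) / s))
    (f := fun u : ℝ => s * u + m) (f' := fun _ => s) measurableSet_Iic
    (fun x _ => (hd x).hasDerivWithinAt) hinj (gpdf m s)
  rw [← himg, hchg]
  unfold stdCdf
  refine setIntegral_congr_ae measurableSet_Iic (Filter.Eventually.of_forall fun u _ => ?_)
  rw [smul_eq_mul, abs_of_pos hs, gpdf_std hs]
  have h2 : (s * u + m - m) / s = u := by field_simp; ring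
  rw [h2]
  field_simp


lemma setIntegral_sub_mul_gpdf_Iic {s : ℝ} (hs : 0 < s) (m a : ℝ) :
    ∫ x in Set.Iic a, (x - m) * gpdf m s x = -s ^ 2 * gpdf m s a := by
  have h := integral_Iic_of_hasDerivAt_of_tendsto' (a := a)
    (fun x _ => hasDerivAt_neg_sq_gpdf hs x)
    (integrable_sub_mul_gpdf hs m).integrableOn
    (((tendsto_gpdf_cocompact hs).mono_left atBot_le_cocompact').const_mul (-s ^ 2))
  simpa using h

lemma setIntegral_sq_sub_mul_gpdf_Iic {s : ℝ} (hs : 0 < s) (m a : ℝ) :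
    ∫ x in Set.Iic a, (x - m) ^ 2 * gpdf m s x
      = s ^ 2 * (∫ x in Set.Iic a, gpdf m s x) - s ^ 2 * ((a - m) * gpdf m s a) := by
  have hint : Integrable (fun x => (x - m) ^ 2 * gpdf m s x - s ^ 2 * gpdf m s x) :=
    (integrable_sq_sub_mul_gpdf hs m).sub ((integrable_gpdf hs m).const_mul _)
  have h := integral_Iic_of_hasDerivAt_of_tendsto' (a := a)
    (fun x _ => hasDerivAt_neg_sq_sub_gpdf hs x)
    hint.integrableOn
    (((tendsto_sub_mul_gpdf_cocompact hs).mono_left atBot_le_cocompact').const_mul (-s ^ 2))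
  simp only [mul_zero, sub_zero] at h
  rw [integral_sub (integrable_sq_sub_mul_gpdf hs m).integrableOn
    ((integrable_gpdf hs m).const_mul _).integrableOn, integral_const_mul] at h
  linarith

lemma stdPdf_pos (t : ℝ) : 0 < stdPdf t := by
  unfold stdPdf; positivity

lemma stdCdf_pos (t : ℝ) : 0 < stdCdf t := by
  unfold stdCdf
  rw [setIntegral_pos_iff_support_of_nonneg_ae
    (Filter.Eventually.of_forall fun x => (stdPdf_pos x).le)
    integrable_stdPdf.integrableOn]
  have : Function.support stdPdf = Set.univ := by
    ext x; simp [Function.mem_support, (stdPdf_pos x).ne']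
  rw [this, Set.univ_inter]
  simp [Real.volume_Iic]


lemma gaussDensity_factor (mx my σx sy c : ℝ) (hσx : 0 < σx) (hsy : 0 < sy) (hc : c ^ 2 < σx ^ 2 * sy ^ 2)
    (x y : ℝ) :
    gaussDensity ![mx, my] !![σx ^ 2, c; c, sy ^ 2] ![x, y]
      = gpdf (mx + c / sy ^ 2 * (y - my)) (Real.sqrt (σx ^ 2 - c ^ 2 / sy ^ 2)) x
        * gpdf my sy y := by
  have hD : (0:ℝ) < σx ^ 2 * sy ^ 2 - c ^ 2 := by linarith
  have hτ2 : (0:ℝ) < σx ^ 2 - c ^ 2 / sy ^ 2 := by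
    rw [sub_pos, div_lt_iff₀ (by positivity)]
    linarith
  set τ : ℝ := Real.sqrt (σx ^ 2 - c ^ 2 / sy ^ 2) with hτdef
  have hτ : 0 < τ := Real.sqrt_pos.mpr hτ2
  have hτsq : τ ^ 2 = σx ^ 2 - c ^ 2 / sy ^ 2 := Real.sq_sqrt hτ2.le
  have hdet : (!![σx ^ 2, c; c, sy ^ 2] : Matrix (Fin 2) (Fin 2) ℝ).det
      = σx ^ 2 * sy ^ 2 - c ^ 2 := by
    simp [Matrix.det_fin_two_of]; ring
  have hinv : (!![σx ^ 2, c; c, sy ^ 2] : Matrix (Fin 2) (Fin 2) ℝ)⁻¹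
      = (σx ^ 2 * sy ^ 2 - c ^ 2)⁻¹ • !![sy ^ 2, -c; -c, σx ^ 2] := by
    rw [Matrix.inv_def, hdet, Matrix.adjugate_fin_two_of, Ring.inverse_eq_inv]
  have hquad : (![x, y] - ![mx, my]) ⬝ᵥ
      ((!![σx ^ 2, c; c, sy ^ 2] : Matrix (Fin 2) (Fin 2) ℝ)⁻¹ *ᵥ (![x, y] - ![mx, my]))
      = (σx ^ 2 * sy ^ 2 - c ^ 2)⁻¹ *
        (sy ^ 2 * (x - mx) ^ 2 - 2 * c * (x - mx) * (y - my) + σx ^ 2 * (y - my) ^ 2) := by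
    rw [hinv]
    simp [dotProduct, Matrix.mulVec, Fin.sum_univ_two]
    ring
  unfold gaussDensity gpdf
  rw [hquad, hdet]
  -- constants
  have hconst : (Real.sqrt ((2 * Real.pi) ^ 2 * (σx ^ 2 * sy ^ 2 - c ^ 2)))⁻¹
      = (τ * Real.sqrt (2 * Real.pi))⁻¹ * (sy * Real.sqrt (2 * Real.pi))⁻¹ := by
    have h1 : Real.sqrt ((2 * Real.pi) ^ 2 * (σx ^ 2 * sy ^ 2 - c ^ 2))
        = (2 * Real.pi) * Real.sqrt (σx ^ 2 * sy ^ 2 - c ^ 2) := by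
      rw [Real.sqrt_mul (by positivity), Real.sqrt_sq (by positivity)]
    have h2 : τ * sy = Real.sqrt (σx ^ 2 * sy ^ 2 - c ^ 2) := by
      rw [hτdef, show σx ^ 2 * sy ^ 2 - c ^ 2 = (σx ^ 2 - c ^ 2 / sy ^ 2) * sy ^ 2 from by
        field_simp, Real.sqrt_mul hτ2.le, Real.sqrt_sq hsy.le]
    have h3 : Real.sqrt (2 * Real.pi) * Real.sqrt (2 * Real.pi) = 2 * Real.pi := by
      rw [← Real.sqrt_mul (by positivity), Real.sqrt_mul_self (by positivity)]
    rw [h1, ← h2]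
    have h4 : (τ * Real.sqrt (2 * Real.pi))⁻¹ * (sy * Real.sqrt (2 * Real.pi))⁻¹
        = (τ * sy * (Real.sqrt (2 * Real.pi) * Real.sqrt (2 * Real.pi)))⁻¹ := by
      rw [← mul_inv]; ring_nf
    rw [h4, h3]
    congr 1
    ring
  rw [hconst]
  -- exponents
  have hexp : -(1 / 2) * ((σx ^ 2 * sy ^ 2 - c ^ 2)⁻¹ *
        (sy ^ 2 * (x - mx) ^ 2 - 2 * c * (x - mx) * (y - my) + σx ^ 2 * (y - my) ^ 2))
      = -(x - (mx + c / sy ^ 2 * (y - my))) ^ 2 / (2 * τ ^ 2)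
        + -(y - my) ^ 2 / (2 * sy ^ 2) := by
    rw [hτsq]
    have hsy2 : (sy:ℝ) ^ 2 ≠ 0 := by positivity
    have hτ2' : σx ^ 2 - c ^ 2 / sy ^ 2 ≠ 0 := ne_of_gt hτ2
    field_simp
    ring
  rw [hexp, Real.exp_add]
  ring


section key
variable {τ sy my : ℝ} {μc : ℝ → ℝ} {a : ℝ}

lemma fubini_key (hτ : 0 < τ) (hsy : 0 < sy) (hμc : Continuous μc) (a : ℝ)
    (hint2 : Integrable (fun y => (τ ^ 2 + (μc y) ^ 2) * gpdf my sy y)) :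
    ((∫ p in (Set.univ ×ˢ Set.Iic a : Set (ℝ × ℝ)),
        p.1 ^ 2 * (gpdf (μc p.2) τ p.1 * gpdf my sy p.2))
      = ∫ y in Set.Iic a, (τ ^ 2 + (μc y) ^ 2) * gpdf my sy y)
    ∧ ((∫ p in (Set.univ ×ˢ Set.Iic a : Set (ℝ × ℝ)),
        p.1 * (gpdf (μc p.2) τ p.1 * gpdf my sy p.2))
      = ∫ y in Set.Iic a, μc y * gpdf my sy y) := by
  set ν : Measure ℝ := volume.restrict (Set.Iic a) with hν
  have hmeas : (volume : Measure (ℝ × ℝ)).restrict (Set.univ ×ˢ Set.Iic a)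
      = volume.prod ν := by
    rw [Measure.volume_eq_prod, ← Measure.prod_restrict, Measure.restrict_univ]
  have hHcont : Continuous fun p : ℝ × ℝ => gpdf (μc p.2) τ p.1 := by
    unfold gpdf; fun_prop
  have hGcont : Continuous fun p : ℝ × ℝ => gpdf my sy p.2 := by
    unfold gpdf; fun_prop
  have hprod_pos : ∀ p : ℝ × ℝ, 0 ≤ gpdf (μc p.2) τ p.1 * gpdf my sy p.2 :=
    fun p => le_of_lt (mul_pos (gpdf_pos hτ _) (gpdf_pos hsy _))
  -- integrability of k = 0 version
  have hInt0 : Integrable (fun p : ℝ × ℝ => gpdf (μc p.2) τ p.1 * gpdf my sy p.2)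
      (volume.prod ν) := by
    rw [integrable_prod_iff' (show AEStronglyMeasurable (fun p : ℝ × ℝ => gpdf (μc p.2) τ p.1 * gpdf my sy p.2) (volume.prod ν) from (hHcont.mul hGcont).aestronglyMeasurable)]
    constructor
    · exact Filter.Eventually.of_forall fun y =>
        (integrable_gpdf hτ (μc y)).mul_const (gpdf my sy y)
    · refine (((integrable_gpdf hsy my).restrict (s := Set.Iic a)).congr
        (Filter.Eventually.of_forall fun y => ?_))
      have h4 : ∀ x : ℝ, ‖gpdf (μc y) τ x * gpdf my sy y‖
          = gpdf (μc y) τ x * gpdf my sy y := fun x =>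
        Real.norm_of_nonneg (hprod_pos (x, y))
      simp only
      symm
      rw [integral_congr_ae (Filter.Eventually.of_forall h4),
        integral_mul_const, integral_gpdf hτ, one_mul]
  -- integrability of k = 2 version
  have hInt2 : Integrable (fun p : ℝ × ℝ => p.1 ^ 2 * (gpdf (μc p.2) τ p.1 * gpdf my sy p.2))
      (volume.prod ν) := by
    rw [integrable_prod_iff'
      (show AEStronglyMeasurable (fun p : ℝ × ℝ => p.1 ^ 2 * (gpdf (μc p.2) τ p.1 * gpdf my sy p.2)) (volume.prod ν) from ((continuous_fst.pow 2).mul (hHcont.mul hGcont)).aestronglyMeasurable)]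
    constructor
    · refine Filter.Eventually.of_forall fun y => ?_
      refine ((integrable_sq_mul_gpdf hτ (μc y)).mul_const (gpdf my sy y)).congr
        (Filter.Eventually.of_forall fun x => ?_)
      simp only; ring
    · refine ((hint2.restrict (s := Set.Iic a)).congr
        (Filter.Eventually.of_forall fun y => ?_))
      have h5 : ∀ x : ℝ, ‖x ^ 2 * (gpdf (μc y) τ x * gpdf my sy y)‖
          = (x ^ 2 * gpdf (μc y) τ x) * gpdf my sy y := fun x => by
        rw [Real.norm_of_nonneg (mul_nonneg (sq_nonneg x) (hprod_pos (x, y)))]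
        ring
      simp only
      symm
      rw [integral_congr_ae (Filter.Eventually.of_forall h5),
        integral_mul_const, integral_sq_mul_gpdf hτ]
  -- integrability of k = 1 version by domination
  have hInt1 : Integrable (fun p : ℝ × ℝ => p.1 * (gpdf (μc p.2) τ p.1 * gpdf my sy p.2))
      (volume.prod ν) := by
    have hmaj : Integrable (fun p : ℝ × ℝ =>
        (1 / 2 : ℝ) * (gpdf (μc p.2) τ p.1 * gpdf my sy p.2
          + p.1 ^ 2 * (gpdf (μc p.2) τ p.1 * gpdf my sy p.2))) (volume.prod ν) := by
      refine ((hInt0.add hInt2).const_mul (1 / 2)).congr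
        (Filter.Eventually.of_forall fun p => ?_)
      simp only [Pi.add_apply]
    refine Integrable.mono' hmaj
      ((continuous_fst.mul (hHcont.mul hGcont)).aestronglyMeasurable)
      (Filter.Eventually.of_forall fun p => ?_)
    rw [Real.norm_eq_abs, abs_mul, abs_of_nonneg (hprod_pos p)]
    have h7 : |p.1| ≤ (1 + p.1 ^ 2) / 2 := by
      nlinarith [sq_nonneg (|p.1| - 1), sq_abs p.1]
    refine le_trans (mul_le_mul_of_nonneg_right h7 (hprod_pos p)) (le_of_eq (by ring))
  constructor
  · rw [hmeas, integral_prod_symm _ hInt2]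
    refine integral_congr_ae (Filter.Eventually.of_forall fun y => ?_)
    simp only
    have h6 : ∀ x : ℝ, x ^ 2 * (gpdf (μc y) τ x * gpdf my sy y)
        = (x ^ 2 * gpdf (μc y) τ x) * gpdf my sy y := fun x => by ring
    rw [integral_congr_ae (Filter.Eventually.of_forall h6),
      integral_mul_const, integral_sq_mul_gpdf hτ]
  · rw [hmeas, integral_prod_symm _ hInt1]
    refine integral_congr_ae (Filter.Eventually.of_forall fun y => ?_)
    simp only
    have h6 : ∀ x : ℝ, x * (gpdf (μc y) τ x * gpdf my sy y)
        = (x * gpdf (μc y) τ x) * gpdf my sy y := fun x => by ring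
    rw [integral_congr_ae (Filter.Eventually.of_forall h6),
      integral_mul_const, integral_id_mul_gpdf hτ]
end key


theorem bivariate_censored_conditional_variance_lower
    (mx my σx sy c : ℝ) (hσx : 0 < σx) (hsy : 0 < sy) (hc : c ^ 2 < σx ^ 2 * sy ^ 2)
    (f : ℝ → ℝ → ℝ)
    (hf : ∀ x y, f x y = gaussDensity ![mx, my] !![σx ^ 2, c; c, sy ^ 2] ![x, y])
    (a astar lam μhat : ℝ)
    (hastar : astar = (a - my) / sy)
    (hlam : lam = stdPdf astar / stdCdf astar)
    (hμhat : μhat = (stdCdf astar)⁻¹ *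
      ∫ p in (Set.univ ×ˢ Set.Iic a : Set (ℝ × ℝ)), p.1 * f p.1 p.2) :
    (stdCdf astar)⁻¹ *
        (∫ p in (Set.univ ×ˢ Set.Iic a : Set (ℝ × ℝ)), p.1 ^ 2 * f p.1 p.2)
      - μhat ^ 2
      = σx ^ 2 - (c ^ 2 / sy ^ 2) * (astar * lam + lam ^ 2) := by
  have hτ2 : (0:ℝ) < σx ^ 2 - c ^ 2 / sy ^ 2 := by
    rw [sub_pos, div_lt_iff₀ (by positivity)]
    linarith
  set τ : ℝ := Real.sqrt (σx ^ 2 - c ^ 2 / sy ^ 2) with hτdef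
  have hτ : 0 < τ := Real.sqrt_pos.mpr hτ2
  have hτsq : τ ^ 2 = σx ^ 2 - c ^ 2 / sy ^ 2 := Real.sq_sqrt hτ2.le
  set r : ℝ := c / sy ^ 2 with hrdef
  set μc : ℝ → ℝ := fun y => mx + r * (y - my) with hμcdef
  have hμcc : Continuous μc := by fun_prop
  have hfact : ∀ x y, f x y = gpdf (μc y) τ x * gpdf my sy y := fun x y => by
    rw [hf]; exact gaussDensity_factor mx my σx sy c hσx hsy hc x y
  -- integrability hypothesis for fubini_key
  have hint2 : Integrable (fun y => (τ ^ 2 + (μc y) ^ 2) * gpdf my sy y) := by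
    have h := (((integrable_gpdf hsy my).const_mul (τ ^ 2 + mx ^ 2)).add
      ((integrable_sub_mul_gpdf hsy my).const_mul (2 * mx * r))).add
      ((integrable_sq_sub_mul_gpdf hsy my).const_mul (r ^ 2))
    refine h.congr (Filter.Eventually.of_forall fun y => ?_)
    simp only [Pi.add_apply, hμcdef]
    ring
  obtain ⟨e2, e1⟩ := fubini_key hτ hsy hμcc a hint2
  -- rewrite f in the integrals
  have hf2 : (∫ p in (Set.univ ×ˢ Set.Iic a : Set (ℝ × ℝ)), p.1 ^ 2 * f p.1 p.2)
      = ∫ y in Set.Iic a, (τ ^ 2 + (μc y) ^ 2) * gpdf my sy y := by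
    rw [← e2]
    exact integral_congr_ae (Filter.Eventually.of_forall fun p => by simp only [hfact])
  have hf1 : (∫ p in (Set.univ ×ˢ Set.Iic a : Set (ℝ × ℝ)), p.1 * f p.1 p.2)
      = ∫ y in Set.Iic a, μc y * gpdf my sy y := by
    rw [← e1]
    exact integral_congr_ae (Filter.Eventually.of_forall fun p => by simp only [hfact])
  -- compute the y-integrals
  have hJ0 : ∫ y in Set.Iic a, gpdf my sy y = stdCdf astar := by
    rw [setIntegral_gpdf_Iic hsy, hastar]
  have hJ1 : ∫ y in Set.Iic a, (y - my) * gpdf my sy y = -sy * stdPdf astar := by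
    rw [setIntegral_sub_mul_gpdf_Iic hsy, gpdf_std hsy, ← hastar]
    field_simp
  have hamy : a - my = sy * astar := by rw [hastar]; field_simp
  have hJ2 : ∫ y in Set.Iic a, (y - my) ^ 2 * gpdf my sy y
      = sy ^ 2 * stdCdf astar - sy ^ 2 * astar * stdPdf astar := by
    rw [setIntegral_sq_sub_mul_gpdf_Iic hsy, hJ0, gpdf_std hsy, ← hastar, hamy]
    field_simp
  have hI2 : ∫ y in Set.Iic a, (τ ^ 2 + (μc y) ^ 2) * gpdf my sy y
      = (τ ^ 2 + mx ^ 2) * stdCdf astar + (2 * mx * r) * (-sy * stdPdf astar)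
        + r ^ 2 * (sy ^ 2 * stdCdf astar - sy ^ 2 * astar * stdPdf astar) := by
    have hsplit : ∀ y : ℝ, (τ ^ 2 + (μc y) ^ 2) * gpdf my sy y
        = (τ ^ 2 + mx ^ 2) * gpdf my sy y
          + (2 * mx * r) * ((y - my) * gpdf my sy y)
          + r ^ 2 * ((y - my) ^ 2 * gpdf my sy y) := by
      intro y; simp only [hμcdef]; ring
    have hA : IntegrableOn (fun y : ℝ => (τ ^ 2 + mx ^ 2) * gpdf my sy y
        + (2 * mx * r) * ((y - my) * gpdf my sy y)) (Set.Iic a) := by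
      refine (((integrable_gpdf hsy my).const_mul (τ ^ 2 + mx ^ 2)).add
        ((integrable_sub_mul_gpdf hsy my).const_mul (2 * mx * r))).integrableOn.congr_fun
        (fun y _ => ?_) measurableSet_Iic
      simp only [Pi.add_apply]
    rw [integral_congr_ae (Filter.Eventually.of_forall hsplit),
      integral_add hA ((integrable_sq_sub_mul_gpdf hsy my).const_mul _).integrableOn,
      integral_add ((integrable_gpdf hsy my).const_mul _).integrableOn
        ((integrable_sub_mul_gpdf hsy my).const_mul _).integrableOn,
      integral_const_mul, integral_const_mul, integral_const_mul, hJ0, hJ1, hJ2]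
  have hI1 : ∫ y in Set.Iic a, μc y * gpdf my sy y
      = mx * stdCdf astar + r * (-sy * stdPdf astar) := by
    have hsplit : ∀ y : ℝ, μc y * gpdf my sy y
        = mx * gpdf my sy y + r * ((y - my) * gpdf my sy y) := by
      intro y; simp only [hμcdef]; ring
    rw [integral_congr_ae (Filter.Eventually.of_forall hsplit),
      integral_add ((integrable_gpdf hsy my).const_mul _).integrableOn
        ((integrable_sub_mul_gpdf hsy my).const_mul _).integrableOn,
      integral_const_mul, integral_const_mul, hJ0, hJ1]
  -- final algebra
  have hΦ : 0 < stdCdf astar := stdCdf_pos astar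
  rw [hf2, hI2, hμhat, hf1, hI1, hlam, hrdef, hτsq]
  field_simp
  ring
end

section
/- Let m ∈ ℝ, s > 0 and a < b be real numbers, let μ be the normal probability measure N(m, s²) on ℝ, and let ν be the pushforward of μ under the clamping map y ↦ max(a, min(b, y)). Then for every Borel set S ⊆ ℝ: ν(S) = μ(S ∩ (a, b)) + Φ((a − m)/s)·𝟙[a ∈ S] + (1 − Φ((b − m)/s))·𝟙[b ∈ S]. In particular ν({a}) = Φ((a − m)/s), ν({b}) = 1 − Φ((b − m)/s), and ν agrees with μ on Borel subsets of the open interval (a, b). -/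
open MeasureTheory Real Matrix Classical

lemma stdPdf_eq_s11 (x : ℝ) : stdPdf x = ProbabilityTheory.gaussianPDFReal 0 1 x := by
  simp only [stdPdf, ProbabilityTheory.gaussianPDFReal, NNReal.coe_one, mul_one, sub_zero]

lemma stdNormal_Iic (t : ℝ) :
    ProbabilityTheory.gaussianReal 0 1 (Set.Iic t) = ENNReal.ofReal (stdCdf t) := by
  rw [ProbabilityTheory.gaussianReal_apply_eq_integral 0 one_ne_zero, stdCdf]
  congr 1
  exact setIntegral_congr_fun measurableSet_Iic fun x _ => (stdPdf_eq_s11 x).symm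

lemma stdNormal_singleton (u : ℝ) : ProbabilityTheory.gaussianReal 0 1 {u} = 0 :=
  ProbabilityTheory.gaussianReal_absolutelyContinuous 0 one_ne_zero (Real.volume_singleton)

lemma stdNormal_Iio (t : ℝ) :
    ProbabilityTheory.gaussianReal 0 1 (Set.Iio t) = ENNReal.ofReal (stdCdf t) := by
  rw [← stdNormal_Iic]
  refine le_antisymm (measure_mono Set.Iio_subset_Iic_self) ?_
  calc ProbabilityTheory.gaussianReal 0 1 (Set.Iic t)
      = ProbabilityTheory.gaussianReal 0 1 (Set.Iio t ∪ {t}) := by rw [Set.Iio_union_right]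
    _ ≤ _ + _ := measure_union_le _ _
    _ = ProbabilityTheory.gaussianReal 0 1 (Set.Iio t) := by rw [stdNormal_singleton, add_zero]

lemma stdNormal_Ici (t : ℝ) :
    ProbabilityTheory.gaussianReal 0 1 (Set.Ici t) = ENNReal.ofReal (1 - stdCdf t) := by
  have h := measure_compl (μ := ProbabilityTheory.gaussianReal 0 1) (s := Set.Iio t)
    measurableSet_Iio (measure_ne_top _ _)
  rw [Set.compl_Iio] at h
  rw [h, stdNormal_Iio, measure_univ, ENNReal.ofReal_sub _ (by
    rw [stdCdf]
    exact integral_nonneg fun x => mul_nonneg (by positivity) (Real.exp_pos _).le),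
    ENNReal.ofReal_one]

theorem censored_normal_measure_decomposition (m s a b : ℝ) (hs : 0 < s) (hab : a < b)
    (μ : Measure ℝ) (hμ : μ = ProbabilityTheory.gaussianReal m ⟨s ^ 2, sq_nonneg s⟩)
    (ν : Measure ℝ) (hν : ν = μ.map (fun y => max a (min b y))) :
    (∀ S : Set ℝ, MeasurableSet S →
        ν S = μ (S ∩ Set.Ioo a b)
          + ENNReal.ofReal (stdCdf ((a - m) / s)) * (if a ∈ S then 1 else 0)
          + ENNReal.ofReal (1 - stdCdf ((b - m) / s)) * (if b ∈ S then 1 else 0))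
      ∧ ν {a} = ENNReal.ofReal (stdCdf ((a - m) / s))
      ∧ ν {b} = ENNReal.ofReal (1 - stdCdf ((b - m) / s))
      ∧ ∀ S : Set ℝ, MeasurableSet S → S ⊆ Set.Ioo a b → ν S = μ S := by
  -- express μ as an affine image of the standard normal
  have hmap : μ = (ProbabilityTheory.gaussianReal 0 1).map (fun x => s * x + m) := by
    have key : (ProbabilityTheory.gaussianReal 0 1).map (fun x => s * x + m)
        = ProbabilityTheory.gaussianReal (s * 0 + m) (⟨s ^ 2, sq_nonneg s⟩ * 1) := by
      rw [show (fun x : ℝ => s * x + m) = (fun x => x + m) ∘ (fun x => s * x) from rfl,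
        ← Measure.map_map (measurable_id'.add_const m) (measurable_id'.const_mul s),
        ProbabilityTheory.gaussianReal_map_const_mul,
        ProbabilityTheory.gaussianReal_map_add_const]
      rfl
    rw [hμ, key, mul_zero, zero_add]
    exact congrArg _ (mul_one _).symm
  have haff : Measurable (fun x : ℝ => s * x + m) := (measurable_id'.const_mul s).add_const m
  have hIic : ∀ t : ℝ, μ (Set.Iic t) = ENNReal.ofReal (stdCdf ((t - m) / s)) := by
    intro t
    rw [hmap, Measure.map_apply haff measurableSet_Iic]
    have : (fun x : ℝ => s * x + m) ⁻¹' Set.Iic t = Set.Iic ((t - m) / s) := by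
      ext x
      simp only [Set.mem_preimage, Set.mem_Iic]
      rw [le_div_iff₀ hs, mul_comm]
      constructor <;> intro h <;> linarith
    rw [this, stdNormal_Iic]
  have hIci : ∀ t : ℝ, μ (Set.Ici t) = ENNReal.ofReal (1 - stdCdf ((t - m) / s)) := by
    intro t
    rw [hmap, Measure.map_apply haff measurableSet_Ici]
    have : (fun x : ℝ => s * x + m) ⁻¹' Set.Ici t = Set.Ici ((t - m) / s) := by
      ext x
      simp only [Set.mem_preimage, Set.mem_Ici]
      rw [div_le_iff₀ hs, mul_comm]
      constructor <;> intro h <;> linarith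
    rw [this, stdNormal_Ici]
  have hclamp : Measurable (fun y : ℝ => max a (min b y)) :=
    measurable_const.max (measurable_const.min measurable_id)
  -- preimage decomposition
  have hpre : ∀ S : Set ℝ, (fun y : ℝ => max a (min b y)) ⁻¹' S =
      (S ∩ Set.Ioo a b) ∪ ((if a ∈ S then Set.Iic a else ∅) ∪
        (if b ∈ S then Set.Ici b else ∅)) := by
    intro S
    ext y
    simp only [Set.mem_preimage, Set.mem_union, Set.mem_inter_iff, Set.mem_Ioo]
    rcases le_or_gt y a with hy | hy
    · have : max a (min b y) = a := by
        rw [min_eq_right (hy.trans hab.le), max_eq_left hy]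
      rw [this]
      constructor
      · intro h
        right; left
        simp [h, Set.mem_Iic, hy]
      · rintro ((⟨h1, h2, _⟩) | h | h)
        · exact absurd h2 (not_lt.mpr hy)
        · by_cases ha : a ∈ S
          · exact ha
          · simp [ha] at h
        · by_cases hb : b ∈ S <;> simp [hb, Set.mem_Ici] at h; linarith
    · rcases le_or_gt b y with hby | hby
      · have : max a (min b y) = b := by
          rw [min_eq_left hby, max_eq_right hab.le]
        rw [this]
        constructor
        · intro h
          right; right
          simp [h, Set.mem_Ici, hby]
        · rintro ((⟨h1, _, h3⟩) | h | h)
          · exact absurd h3 (not_lt.mpr hby)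
          · by_cases ha : a ∈ S <;> simp [ha, Set.mem_Iic] at h; linarith
          · by_cases hb : b ∈ S
            · exact hb
            · simp [hb] at h
      · have : max a (min b y) = y := by
          rw [min_eq_right hby.le, max_eq_right hy.le]
        rw [this]
        constructor
        · intro h
          exact Or.inl ⟨h, hy, hby⟩
        · rintro ((⟨h1, _⟩) | h | h)
          · exact h1
          · by_cases ha : a ∈ S <;> simp [ha, Set.mem_Iic] at h; linarith
          · by_cases hb : b ∈ S <;> simp [hb, Set.mem_Ici] at h; linarith
  have main : ∀ S : Set ℝ, MeasurableSet S →
      ν S = μ (S ∩ Set.Ioo a b)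
        + ENNReal.ofReal (stdCdf ((a - m) / s)) * (if a ∈ S then 1 else 0)
        + ENNReal.ofReal (1 - stdCdf ((b - m) / s)) * (if b ∈ S then 1 else 0) := by
    intro S hS
    rw [hν, Measure.map_apply hclamp hS, hpre S]
    have hd1 : Disjoint (S ∩ Set.Ioo a b)
        ((if a ∈ S then Set.Iic a else ∅) ∪ (if b ∈ S then Set.Ici b else ∅)) := by
      rw [Set.disjoint_left]
      rintro x ⟨-, hx1, hx2⟩ (h | h) <;> split_ifs at h <;>
        simp only [Set.mem_Iic, Set.mem_Ici, Set.mem_empty_iff_false] at h <;>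
        linarith
    have hd2 : Disjoint (if a ∈ S then Set.Iic a else ∅) (if b ∈ S then Set.Ici b else ∅) := by
      rw [Set.disjoint_left]
      intro x h1 h2
      split_ifs at h1 h2 <;>
        simp only [Set.mem_Iic, Set.mem_Ici, Set.mem_empty_iff_false] at h1 h2 <;>
        linarith
    have hm2 : MeasurableSet ((if a ∈ S then Set.Iic a else ∅) ∪
        (if b ∈ S then Set.Ici b else ∅)) := by
      apply MeasurableSet.union <;> split_ifs <;> measurability
    have hm3 : MeasurableSet (if b ∈ S then Set.Ici b else ∅) := by
      split_ifs <;> measurability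
    rw [measure_union hd1 hm2, measure_union hd2 hm3]
    have e1 : μ (if a ∈ S then Set.Iic a else ∅)
        = ENNReal.ofReal (stdCdf ((a - m) / s)) * (if a ∈ S then 1 else 0) := by
      split_ifs <;> simp [hIic a]
    have e2 : μ (if b ∈ S then Set.Ici b else ∅)
        = ENNReal.ofReal (1 - stdCdf ((b - m) / s)) * (if b ∈ S then 1 else 0) := by
      split_ifs <;> simp [hIci b]
    rw [e1, e2, add_assoc]
  refine ⟨main, ?_, ?_, ?_⟩
  · have h := main {a} (measurableSet_singleton a)
    simp only [Set.mem_singleton_iff, if_pos rfl, if_neg (hab.ne'), mul_one, mul_zero,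
      add_zero] at h
    rw [h]
    have : {a} ∩ Set.Ioo a b = ∅ := by
      ext x; simp only [Set.mem_inter_iff, Set.mem_singleton_iff, Set.mem_Ioo,
        Set.mem_empty_iff_false, iff_false]
      rintro ⟨rfl, h1, _⟩; exact lt_irrefl _ h1
    rw [this]
    simp
  · have h := main {b} (measurableSet_singleton b)
    simp only [Set.mem_singleton_iff, if_pos rfl, if_neg hab.ne, mul_one, mul_zero,
      add_zero, zero_add] at h
    rw [h]
    have : {b} ∩ Set.Ioo a b = ∅ := by
      ext x; simp only [Set.mem_inter_iff, Set.mem_singleton_iff, Set.mem_Ioo,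
        Set.mem_empty_iff_false, iff_false]
      rintro ⟨rfl, _, h2⟩; exact lt_irrefl _ h2
    rw [this]
    simp
  · intro S hS hsub
    have h := main S hS
    have ha : a ∉ S := fun h' => by have := hsub h'; simp [Set.mem_Ioo] at this
    have hb : b ∉ S := fun h' => by have := hsub h'; simp [Set.mem_Ioo] at this
    rw [h, if_neg ha, if_neg hb, Set.inter_eq_left.mpr hsub]
    simp
end
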